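/- Let 0 < c_tc < 1, δ ≥ 0 and τ > (1 + c_tc)/(1 − c_tc). If a real number r satisfies r > τδ and r > 0, then r² > r (δ + c_tc (r + δ)). Consequently, in the RESESOP iteration with α_n := ⟨u_n, x_n⟩ − ‖R_n‖² and ξ_n := ‖R_n‖ (δ + c_tc (‖R_n‖ + δ)), as long as the residual satisfies ‖R_n‖ > τδ, the current iterate x_n satisfies ⟨u_n, x_n⟩ > α_n + ξ_n, i.e., x_n lies in H_>(u_n, α_n + ξ_n) above the stripe H(u_n, α_n, ξ_n). -/
import Mathlib


open RealInnerProductSpace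

/-- Discrepancy principle and position above the stripe: if `0 < c_tc < 1`,
`δ ≥ 0` and `τ > (1+c_tc)/(1−c_tc)`, then any `r > τδ` with `r > 0` satisfies
`r² > r(δ + c_tc(r+δ))`; consequently, as long as `‖R_n‖ > τδ`, the RESESOP
iterate `x_n` satisfies `⟪u_n, x_n⟫ > α_n + ξ_n`, i.e. it lies above the stripe. -/
theorem iterate_above_stripe
    {X Y : Type*} [NormedAddCommGroup X] [InnerProductSpace ℝ X]
    [NormedAddCommGroup Y] [InnerProductSpace ℝ Y]
    (ctc δ τ : ℝ) (hctc₀ : 0 < ctc) (hctc₁ : ctc < 1) (hδ : 0 ≤ δ)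
    (hτ : τ > (1 + ctc) / (1 - ctc)) :
    (∀ r : ℝ, r > τ * δ → r > 0 → r ^ 2 > r * (δ + ctc * (r + δ))) ∧
    (∀ (xn un : X) (Rn : Y), ‖Rn‖ > τ * δ →
      ⟪un, xn⟫ >
        (⟪un, xn⟫ - ‖Rn‖ ^ 2) + ‖Rn‖ * (δ + ctc * (‖Rn‖ + δ))) := by
  have h1c : 0 < 1 - ctc := by linarith
  have hτ' : τ * (1 - ctc) > 1 + ctc := by
    have := (div_lt_iff₀ h1c).mp hτ
    linarith
  have key : ∀ r : ℝ, r > τ * δ → r > 0 → r ^ 2 > r * (δ + ctc * (r + δ)) := by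
    intro r hr hr0
    have : r * (1 - ctc) > δ * (1 + ctc) := by
      rcases eq_or_lt_of_le hδ with h | h
      · rw [← h]; nlinarith
      · have : τ * δ * (1 - ctc) > (1 + ctc) * δ := by
          have := mul_lt_mul_of_pos_right hτ' h
          nlinarith
        nlinarith
    nlinarith
  refine ⟨key, fun xn un Rn hR => ?_⟩
  have hτ0 : 0 < τ := by
    have : (0:ℝ) < (1 + ctc) / (1 - ctc) := by positivity
    linarith
  have hR0 : ‖Rn‖ > 0 := lt_of_le_of_lt (by positivity) hR
  have := key ‖Rn‖ hR hR0
  linarith
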